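/- Let P be a sign-ranked labeled poset on [p] whose rank function ρ attains only non-negative values, and let s(x) = ρ(x) + 1 for all x ∈ [p]. Define u : ℕ(P,s) → ℤ^p by u(f)(x*) = f(x) + ρ(x), where x* = p+1−x denotes the relabeling in the dual poset P* with s*(x*) = s(x). Then for every n ∈ ℕ, u restricts to a bijection from ℕ_{≤n}(P,s) onto ℕ_{<n+1}(P*,s*). -/

import Mathlib

open scoped Classical

noncomputable section

/-- `f : Fin p → ℕ` is a lecture hall `(P,s)`-partition: labels are compared via the
usual order on `Fin p`. -/
def IsLHPart {p : ℕ} (P : PartialOrder (Fin p)) (s : Fin p → ℕ) (f : Fin p → ℕ) : Prop :=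
  (∀ x y, P.lt x y → (f x : ℚ) / (s x : ℚ) ≤ (f y : ℚ) / (s y : ℚ)) ∧
  ∀ x y, P.lt x y → y < x → (f x : ℚ) / (s x : ℚ) < (f y : ℚ) / (s y : ℚ)

/-- The set of linear extensions (Jordan–Hölder set) of a labeled poset. -/
def LinExt {p : ℕ} (P : PartialOrder (Fin p)) : Set (Equiv.Perm (Fin p)) :=
  {π | ∀ i j, P.le (π i) (π j) → i ≤ j}

/-- The set `L(P,s)` of `s`-colored permutations `(π, r)` with `π ∈ L(P)`. -/
def LPs {p : ℕ} (P : PartialOrder (Fin p)) (s : Fin p → ℕ) :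
    Finset (Equiv.Perm (Fin p) × (∀ x : Fin p, Fin (s x))) :=
  Finset.univ.filter fun τ => τ.1 ∈ LinExt P

/-- Descent of `τ = (π,r)` at (1-based) position `i`. -/
def IsDesc {p : ℕ} (s : Fin p → ℕ) (π : Equiv.Perm (Fin p)) (r : Fin p → ℕ) (i : ℕ) : Prop :=
  ∃ (h1 : i - 1 < p) (h2 : i < p),
    ((π ⟨i - 1, h1⟩ < π ⟨i, h2⟩ ∧
      (r (π ⟨i - 1, h1⟩) : ℚ) / (s (π ⟨i - 1, h1⟩) : ℚ) >
        (r (π ⟨i, h2⟩) : ℚ) / (s (π ⟨i, h2⟩) : ℚ)) ∨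
    (π ⟨i, h2⟩ < π ⟨i - 1, h1⟩ ∧
      (r (π ⟨i - 1, h1⟩) : ℚ) / (s (π ⟨i - 1, h1⟩) : ℚ) ≥
        (r (π ⟨i, h2⟩) : ℚ) / (s (π ⟨i, h2⟩) : ℚ)))

/-- The descent set `D₁(τ) ⊆ [p-1]`. -/
def D1 {p : ℕ} (s : Fin p → ℕ) (π : Equiv.Perm (Fin p)) (r : Fin p → ℕ) : Finset ℕ :=
  (Finset.Icc 1 (p - 1)).filter (IsDesc s π r)

/-- The descent set `D₃(τ)`: descents of `(π, r + 1)` (i.e. using `(r(x)+1)/s(x)`). -/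
def D3 {p : ℕ} (s : Fin p → ℕ) (π : Equiv.Perm (Fin p)) (r : Fin p → ℕ) : Finset ℕ :=
  D1 s π fun x => r x + 1

/-- `D₂(τ) = D₁(τ) ∪ {0}` if `r(π₁) = 0`, else `D₁(τ)`. -/
def D2 {p : ℕ} (hp : 0 < p) (s : Fin p → ℕ) (π : Equiv.Perm (Fin p)) (r : Fin p → ℕ) :
    Finset ℕ :=
  if r (π ⟨0, hp⟩) = 0 then insert 0 (D1 s π r) else D1 s π r

/-- `D(τ) = D₁(τ) ∪ {p}` if `r(π_p) > 0`, else `D₁(τ)`. -/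
def Dfull {p : ℕ} (hp : 0 < p) (s : Fin p → ℕ) (π : Equiv.Perm (Fin p)) (r : Fin p → ℕ) :
    Finset ℕ :=
  if r (π ⟨p - 1, Nat.sub_lt hp Nat.one_pos⟩) = 0 then D1 s π r else insert p (D1 s π r)

/-- `D₄(τ) = D₂(τ) ∪ {p}` if `r(π_p) > 0`, else `D₂(τ)`. -/
def D4 {p : ℕ} (hp : 0 < p) (s : Fin p → ℕ) (π : Equiv.Perm (Fin p)) (r : Fin p → ℕ) :
    Finset ℕ :=
  if r (π ⟨p - 1, Nat.sub_lt hp Nat.one_pos⟩) = 0 then D2 hp s π r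
  else insert p (D2 hp s π r)

/-- The dual labeled poset `P*`: `i ⪯ j` in `P` iff `i* ⪯* j*` in `P*`, where
`i* = p + 1 - i` is realized by `Fin.rev`. -/
def dualOrder {p : ℕ} (P : PartialOrder (Fin p)) : PartialOrder (Fin p) where
  le a b := P.le a.rev b.rev
  lt a b := P.lt a.rev b.rev
  le_refl _ := P.le_refl _
  le_trans _ _ _ h1 h2 := P.le_trans _ _ _ h1 h2
  le_antisymm _ _ h1 h2 := Fin.rev_injective (P.le_antisymm _ _ h1 h2)
  lt_iff_le_not_ge _ _ := P.lt_iff_le_not_ge _ _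

/-- `(x,y)` is a covering relation of `P`. -/
def Covers {p : ℕ} (P : PartialOrder (Fin p)) (x y : Fin p) : Prop :=
  P.lt x y ∧ ∀ z, P.lt x z → ¬ P.lt z y

/-- `ℕ_{≤n}(P,s)`. -/
def Nle {p : ℕ} (P : PartialOrder (Fin p)) (s : Fin p → ℕ) (n : ℕ) : Set (Fin p → ℕ) :=
  {f | IsLHPart P s f ∧ ∀ x, (f x : ℚ) / (s x : ℚ) ≤ (n : ℚ)}

/-- `ℕ_{<m}(P,s)`. -/
def Nlt {p : ℕ} (P : PartialOrder (Fin p)) (s : Fin p → ℕ) (m : ℕ) : Set (Fin p → ℕ) :=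
  {f | IsLHPart P s f ∧ ∀ x, (f x : ℚ) / (s x : ℚ) < (m : ℚ)}

/-! ### Auxiliary lemmas -/

lemma nat_div_le_iff {a b c d : ℕ} (hc : 0 < c) (hd : 0 < d) :
    (a : ℚ) / (c : ℚ) ≤ (b : ℚ) / (d : ℚ) ↔ a * d ≤ b * c := by
  rw [div_le_div_iff₀ (by exact_mod_cast hc) (by exact_mod_cast hd)]
  exact_mod_cast Iff.rfl

lemma nat_div_lt_iff {a b c d : ℕ} (hc : 0 < c) (hd : 0 < d) :
    (a : ℚ) / (c : ℚ) < (b : ℚ) / (d : ℚ) ↔ a * d < b * c := by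
  rw [div_lt_div_iff₀ (by exact_mod_cast hc) (by exact_mod_cast hd)]
  exact_mod_cast Iff.rfl

lemma nat_div_le_nat_iff {a c n : ℕ} (hc : 0 < c) :
    (a : ℚ) / (c : ℚ) ≤ (n : ℚ) ↔ a ≤ n * c := by
  rw [div_le_iff₀ (by exact_mod_cast hc : (0:ℚ) < (c:ℚ))]
  exact_mod_cast Iff.rfl

lemma nat_div_lt_nat_iff {a c m : ℕ} (hc : 0 < c) :
    (a : ℚ) / (c : ℚ) < (m : ℚ) ↔ a < m * c := by
  rw [div_lt_iff₀ (by exact_mod_cast hc : (0:ℚ) < (c:ℚ))]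
  exact_mod_cast Iff.rfl

lemma exists_cover_below {p : ℕ} (P : PartialOrder (Fin p)) (x : Fin p)
    (h : ∃ y, P.lt y x) : ∃ y, Covers P y x := by
  classical
  have Ptrans : ∀ {a b c : Fin p}, P.lt a b → P.lt b c → P.lt a c :=
    fun h1 h2 => @lt_trans _ P.toPreorder _ _ _ h1 h2
  have Pirr : ∀ a : Fin p, ¬ P.lt a a := fun a => @lt_irrefl _ P.toPreorder a
  set S : Finset (Fin p) := Finset.univ.filter (fun y => P.lt y x) with hS
  have hne : S.Nonempty := by
    obtain ⟨y, hy⟩ := h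
    exact ⟨y, by simp [hS, hy]⟩
  obtain ⟨y, hyS, hymax⟩ := S.exists_max_image
    (fun y => (Finset.univ.filter (fun z => P.lt z y)).card) hne
  have hyx : P.lt y x := by simpa [hS] using hyS
  refine ⟨y, hyx, ?_⟩
  intro z hyz hzx
  have hzS : z ∈ S := by simp [hS, hzx]
  have hsub : (Finset.univ.filter (fun w => P.lt w y)) ⊂
      (Finset.univ.filter (fun w => P.lt w z)) := by
    constructor
    · intro w hw
      simp only [Finset.mem_filter, Finset.mem_univ, true_and] at hw ⊢
      exact Ptrans hw hyz
    · intro hsub'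
      have hy' : y ∈ Finset.univ.filter (fun w => P.lt w z) := by simp [hyz]
      have := hsub' hy'
      simp only [Finset.mem_filter, Finset.mem_univ, true_and] at this
      exact Pirr y this
  have h1 := Finset.card_lt_card hsub
  have h2 := hymax z hzS
  omega

lemma chain_lemma {p : ℕ} (P : PartialOrder (Fin p)) (G : Fin p → ℚ)
    (R : Fin p → Fin p → Prop)
    (hR : ∀ a b c : Fin p, R a c → R a b ∨ R b c)
    (hstep : ∀ x y, Covers P x y → G x ≤ G y ∧ (R x y → G x < G y)) :
    ∀ x y, P.lt x y → G x ≤ G y ∧ (R x y → G x < G y) := by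
  classical
  have Ptrans : ∀ {a b c : Fin p}, P.lt a b → P.lt b c → P.lt a c :=
    fun h1 h2 => @lt_trans _ P.toPreorder _ _ _ h1 h2
  have Pne : ∀ {a b : Fin p}, P.lt a b → a ≠ b :=
    fun h1 => @ne_of_lt _ P.toPreorder _ _ h1
  suffices h : ∀ k : ℕ, ∀ x y : Fin p,
      (Finset.univ.filter fun z => P.lt x z ∧ P.lt z y).card ≤ k →
      P.lt x y → G x ≤ G y ∧ (R x y → G x < G y) by
    intro x y hxy; exact h _ x y le_rfl hxy
  intro k
  induction k with
  | zero =>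
    intro x y hc hxy
    refine hstep x y ⟨hxy, fun z hxz hzy => ?_⟩
    have hz : z ∈ Finset.univ.filter fun z => P.lt x z ∧ P.lt z y := by
      simp [hxz, hzy]
    have := Finset.card_pos.mpr ⟨z, hz⟩
    omega
  | succ k ih =>
    intro x y hc hxy
    by_cases hcv : ∀ z, P.lt x z → ¬ P.lt z y
    · exact hstep x y ⟨hxy, hcv⟩
    · push_neg at hcv
      obtain ⟨z, hxz, hzy⟩ := hcv
      have hzmem : z ∈ Finset.univ.filter fun w => P.lt x w ∧ P.lt w y := by
        simp [hxz, hzy]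
      have hb1 : (Finset.univ.filter fun w => P.lt x w ∧ P.lt w z).card ≤ k := by
        have hsub : (Finset.univ.filter fun w => P.lt x w ∧ P.lt w z) ⊆
            (Finset.univ.filter fun w => P.lt x w ∧ P.lt w y).erase z := by
          intro w hw
          simp only [Finset.mem_filter, Finset.mem_univ, true_and] at hw
          refine Finset.mem_erase.mpr ⟨Pne hw.2, ?_⟩
          simp only [Finset.mem_filter, Finset.mem_univ, true_and]
          exact ⟨hw.1, Ptrans hw.2 hzy⟩
        have h1 := Finset.card_le_card hsub
        have h2 := Finset.card_erase_of_mem hzmem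
        have h3 := Finset.card_pos.mpr ⟨z, hzmem⟩
        omega
      have hb2 : (Finset.univ.filter fun w => P.lt z w ∧ P.lt w y).card ≤ k := by
        have hsub : (Finset.univ.filter fun w => P.lt z w ∧ P.lt w y) ⊆
            (Finset.univ.filter fun w => P.lt x w ∧ P.lt w y).erase z := by
          intro w hw
          simp only [Finset.mem_filter, Finset.mem_univ, true_and] at hw
          refine Finset.mem_erase.mpr ⟨(Pne hw.1).symm, ?_⟩
          simp only [Finset.mem_filter, Finset.mem_univ, true_and]
          exact ⟨Ptrans hxz hw.1, hw.2⟩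
        have h1 := Finset.card_le_card hsub
        have h2 := Finset.card_erase_of_mem hzmem
        have h3 := Finset.card_pos.mpr ⟨z, hzmem⟩
        omega
      obtain ⟨A1, A2⟩ := ih x z hb1 hxz
      obtain ⟨B1, B2⟩ := ih z y hb2 hzy
      refine ⟨A1.trans B1, fun hr => ?_⟩
      rcases hR x z y hr with h | h
      · exact lt_of_lt_of_le (A2 h) B1
      · exact lt_of_le_of_lt A1 (B2 h)

lemma below_induction {p : ℕ} (P : PartialOrder (Fin p)) (Q : Fin p → Prop)
    (hmin : ∀ x, (∀ y, ¬ P.lt y x) → Q x)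
    (hstep : ∀ x y, Covers P y x → Q y → Q x) : ∀ x, Q x := by
  classical
  have Ptrans : ∀ {a b c : Fin p}, P.lt a b → P.lt b c → P.lt a c :=
    fun h1 h2 => @lt_trans _ P.toPreorder _ _ _ h1 h2
  have Pne : ∀ {a b : Fin p}, P.lt a b → a ≠ b :=
    fun h1 => @ne_of_lt _ P.toPreorder _ _ h1
  suffices h : ∀ k : ℕ, ∀ x : Fin p,
      (Finset.univ.filter fun z => P.lt z x).card ≤ k → Q x by
    intro x; exact h _ x le_rfl
  intro k
  induction k with
  | zero =>
    intro x hc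
    apply hmin
    intro y hy
    have hz : y ∈ Finset.univ.filter fun z => P.lt z x := by simp [hy]
    have := Finset.card_pos.mpr ⟨y, hz⟩
    omega
  | succ k ih =>
    intro x hc
    by_cases hm : ∀ y, ¬ P.lt y x
    · exact hmin x hm
    · push_neg at hm
      obtain ⟨y, hcy⟩ := exists_cover_below P x hm
      refine hstep x y hcy (ih y ?_)
      have hymem : y ∈ Finset.univ.filter fun z => P.lt z x := by simp [hcy.1]
      have hsub : (Finset.univ.filter fun z => P.lt z y) ⊆
          (Finset.univ.filter fun z => P.lt z x).erase y := by
        intro w hw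
        simp only [Finset.mem_filter, Finset.mem_univ, true_and] at hw
        refine Finset.mem_erase.mpr ⟨Pne hw, ?_⟩
        simp only [Finset.mem_filter, Finset.mem_univ, true_and]
        exact Ptrans hw hcy.1
      have h1 := Finset.card_le_card hsub
      have h2 := Finset.card_erase_of_mem hymem
      have h3 := Finset.card_pos.mpr ⟨y, hymem⟩
      omega

/-- Let `P` be sign-ranked with non-negative rank function `ρ` (encoded by: `ρ x = 0` for
minimal `x`, and `ρ` changes by `ε(x,y) = ±1` along covering relations according to the
sign of the labels), and let `s = ρ + 1`. Then `u(f)(x*) = f(x) + ρ(x)` restricts to a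
bijection `ℕ_{≤n}(P,s) → ℕ_{<n+1}(P*,s*)` for every `n ∈ ℕ`. -/
theorem sign_ranked_shift_bijection {p : ℕ}
    (P : PartialOrder (Fin p)) (ρ : Fin p → ℕ)
    (hmin : ∀ x, (∀ y, ¬ P.lt y x) → ρ x = 0)
    (hcov : ∀ x y, Covers P x y →
      (x < y → ρ y = ρ x + 1) ∧ (y < x → ρ x = ρ y + 1)) :
    ∀ n : ℕ,
      Set.BijOn (fun (f : Fin p → ℕ) (a : Fin p) => f (Fin.rev a) + ρ (Fin.rev a))
        (Nle P (fun x => ρ x + 1) n)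
        (Nlt (dualOrder P) (fun a => ρ (Fin.rev a) + 1) (n + 1)) := by
  intro n
  have hpos : ∀ x : Fin p, (0 : ℕ) < ρ x + 1 := fun x => Nat.succ_pos _
  have Pne : ∀ {a b : Fin p}, P.lt a b → a ≠ b :=
    fun h1 => @ne_of_lt _ P.toPreorder _ _ h1
  have tri : ∀ x y : Fin p, P.lt x y → x < y ∨ y < x := fun x y h =>
    lt_or_gt_of_ne (Pne h)
  refine ⟨?_, ?_, ?_⟩
  · -- MapsTo
    intro f hf
    have hf1 : ∀ x y, P.lt x y →
        ((f x : ℕ) : ℚ) / ((ρ x + 1 : ℕ) : ℚ) ≤ ((f y : ℕ) : ℚ) / ((ρ y + 1 : ℕ) : ℚ) :=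
      hf.1.1
    have hf2 : ∀ x y, P.lt x y → y < x →
        ((f x : ℕ) : ℚ) / ((ρ x + 1 : ℕ) : ℚ) < ((f y : ℕ) : ℚ) / ((ρ y + 1 : ℕ) : ℚ) :=
      hf.1.2
    have hfb : ∀ x, ((f x : ℕ) : ℚ) / ((ρ x + 1 : ℕ) : ℚ) ≤ (n : ℚ) := hf.2
    have CH := chain_lemma P
      (fun x => ((f x + ρ x : ℕ) : ℚ) / ((ρ x + 1 : ℕ) : ℚ))
      (fun x y => x < y)
      (fun a b c h => by
        have h1 : a < c := h
        rcases lt_or_ge a b with h' | h'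
        · exact Or.inl h'
        · exact Or.inr (show b < c from
            Fin.lt_def.mpr (Nat.lt_of_le_of_lt (Fin.le_def.mp h') (Fin.lt_def.mp h1))))
      (by
        intro x y hcxy
        have hlt := hcxy.1
        obtain ⟨hasc, hdesc⟩ := hcov x y hcxy
        rcases tri x y hlt with hxy | hyx
        · have hρ : ρ y = ρ x + 1 := hasc hxy
          have h0 := hf1 x y hlt
          rw [nat_div_le_iff (hpos x) (hpos y)] at h0
          have hstrict : ((f x + ρ x : ℕ) : ℚ) / ((ρ x + 1 : ℕ) : ℚ) <
              ((f y + ρ y : ℕ) : ℚ) / ((ρ y + 1 : ℕ) : ℚ) := by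
            rw [nat_div_lt_iff (hpos x) (hpos y)]
            rw [hρ] at h0 ⊢
            nlinarith [h0]
          exact ⟨hstrict.le, fun _ => hstrict⟩
        · have hρ : ρ x = ρ y + 1 := hdesc hyx
          have h0 := hf2 x y hlt hyx
          rw [nat_div_lt_iff (hpos x) (hpos y)] at h0
          have hweak : ((f x + ρ x : ℕ) : ℚ) / ((ρ x + 1 : ℕ) : ℚ) ≤
              ((f y + ρ y : ℕ) : ℚ) / ((ρ y + 1 : ℕ) : ℚ) := by
            rw [nat_div_le_iff (hpos x) (hpos y)]
            rw [hρ] at h0 ⊢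
            nlinarith [h0]
          exact ⟨hweak, fun hxy' => absurd (Fin.lt_def.mp (show x < y from hxy'))
            (Nat.lt_asymm (Fin.lt_def.mp hyx))⟩)
    refine ⟨⟨?_, ?_⟩, ?_⟩
    · intro a b hab
      exact (CH a.rev b.rev hab).1
    · intro a b hab hba
      exact (CH a.rev b.rev hab).2 (Fin.rev_lt_rev.mpr hba)
    · intro a
      show ((f a.rev + ρ a.rev : ℕ) : ℚ) / ((ρ a.rev + 1 : ℕ) : ℚ) < ((n + 1 : ℕ) : ℚ)
      rw [nat_div_lt_nat_iff (hpos a.rev)]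
      have h0 := hfb a.rev
      rw [nat_div_le_nat_iff (hpos a.rev)] at h0
      nlinarith [h0]
  · -- InjOn
    intro f hf f' hf' h
    funext x
    have h1 := congrFun h x.rev
    simp only [Fin.rev_rev] at h1
    omega
  · -- SurjOn
    intro g hg
    have hg1 : ∀ a b : Fin p, P.lt a.rev b.rev →
        ((g a : ℕ) : ℚ) / ((ρ a.rev + 1 : ℕ) : ℚ) ≤ ((g b : ℕ) : ℚ) / ((ρ b.rev + 1 : ℕ) : ℚ) :=
      hg.1.1
    have hg2 : ∀ a b : Fin p, P.lt a.rev b.rev → b < a →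
        ((g a : ℕ) : ℚ) / ((ρ a.rev + 1 : ℕ) : ℚ) < ((g b : ℕ) : ℚ) / ((ρ b.rev + 1 : ℕ) : ℚ) :=
      hg.1.2
    have hgb : ∀ a, ((g a : ℕ) : ℚ) / ((ρ a.rev + 1 : ℕ) : ℚ) < ((n + 1 : ℕ) : ℚ) := hg.2
    -- every value of g dominates the rank
    have hge : ∀ x : Fin p, ρ x ≤ g x.rev := by
      refine below_induction P (fun x => ρ x ≤ g x.rev)
        (fun x hx => by show ρ x ≤ g x.rev; rw [hmin x hx]; exact Nat.zero_le _) ?_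
      intro x y hcyx hqy'
      have hqy : ρ y ≤ g y.rev := hqy'
      show ρ x ≤ g x.rev
      obtain ⟨hasc, hdesc⟩ := hcov y x hcyx
      have hlt := hcyx.1  -- P.lt y x
      have hdlt : P.lt y.rev.rev x.rev.rev := by
        rw [Fin.rev_rev, Fin.rev_rev]; exact hlt
      rcases tri y x hlt with hyx | hxy
      · -- labels ascend along the cover (y, x): strict dual inequality
        have hρ : ρ x = ρ y + 1 := hasc hyx
        have hS := hg2 y.rev x.rev hdlt (Fin.rev_lt_rev.mpr hyx)
        simp only [Fin.rev_rev] at hS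
        rw [nat_div_lt_iff (hpos y) (hpos x)] at hS
        rw [hρ] at hS ⊢
        by_contra hcon
        push_neg at hcon
        nlinarith [hS, hqy, hcon]
      · -- labels descend along the cover (y, x): weak dual inequality
        have hρ : ρ y = ρ x + 1 := hdesc hxy
        have hW := hg1 y.rev x.rev hdlt
        simp only [Fin.rev_rev] at hW
        rw [nat_div_le_iff (hpos y) (hpos x)] at hW
        rw [hρ] at hW hqy
        by_contra hcon
        push_neg at hcon
        nlinarith [hW, hqy, hcon]
    set fo : Fin p → ℕ := fun x => g x.rev - ρ x with hfo
    have key : ∀ x, fo x + ρ x = g x.rev := fun x => Nat.sub_add_cancel (hge x)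
    have CH := chain_lemma P
      (fun x => ((fo x : ℕ) : ℚ) / ((ρ x + 1 : ℕ) : ℚ))
      (fun x y => y < x)
      (fun a b c h => by
        have h1 : c < a := h
        rcases lt_or_ge b a with h' | h'
        · exact Or.inl h'
        · exact Or.inr (show c < b from
            Fin.lt_def.mpr (Nat.lt_of_lt_of_le (Fin.lt_def.mp h1) (Fin.le_def.mp h'))))
      (by
        intro x y hcxy
        have hlt := hcxy.1
        obtain ⟨hasc, hdesc⟩ := hcov x y hcxy
        have hdlt : P.lt x.rev.rev y.rev.rev := by
          rw [Fin.rev_rev, Fin.rev_rev]; exact hlt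
        rcases tri x y hlt with hxy | hyx
        · -- ascent: strict dual gives weak original
          have hρ : ρ y = ρ x + 1 := hasc hxy
          have hS := hg2 x.rev y.rev hdlt (Fin.rev_lt_rev.mpr hxy)
          simp only [Fin.rev_rev] at hS
          rw [← key x, ← key y] at hS
          rw [nat_div_lt_iff (hpos x) (hpos y)] at hS
          have hweak : ((fo x : ℕ) : ℚ) / ((ρ x + 1 : ℕ) : ℚ) ≤
              ((fo y : ℕ) : ℚ) / ((ρ y + 1 : ℕ) : ℚ) := by
            rw [nat_div_le_iff (hpos x) (hpos y)]
            rw [hρ] at hS ⊢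
            nlinarith [hS]
          exact ⟨hweak, fun hyx' => absurd (Fin.lt_def.mp (show y < x from hyx'))
            (Nat.lt_asymm (Fin.lt_def.mp hxy))⟩
        · -- descent: weak dual gives strict original
          have hρ : ρ x = ρ y + 1 := hdesc hyx
          have hW := hg1 x.rev y.rev hdlt
          simp only [Fin.rev_rev] at hW
          rw [← key x, ← key y] at hW
          rw [nat_div_le_iff (hpos x) (hpos y)] at hW
          have hstrict : ((fo x : ℕ) : ℚ) / ((ρ x + 1 : ℕ) : ℚ) <
              ((fo y : ℕ) : ℚ) / ((ρ y + 1 : ℕ) : ℚ) := by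
            rw [nat_div_lt_iff (hpos x) (hpos y)]
            rw [hρ] at hW ⊢
            nlinarith [hW]
          exact ⟨hstrict.le, fun _ => hstrict⟩)
    refine ⟨fo, ⟨⟨?_, ?_⟩, ?_⟩, ?_⟩
    · intro x y hxy
      exact (CH x y hxy).1
    · intro x y hxy hyx
      exact (CH x y hxy).2 hyx
    · intro x
      show ((fo x : ℕ) : ℚ) / ((ρ x + 1 : ℕ) : ℚ) ≤ (n : ℚ)
      have h0 := hgb x.rev
      simp only [Fin.rev_rev] at h0
      rw [← key x] at h0
      rw [nat_div_lt_nat_iff (hpos x)] at h0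
      rw [nat_div_le_nat_iff (hpos x)]
      nlinarith [h0]
    · funext a
      show fo a.rev + ρ a.rev = g a
      rw [key a.rev, Fin.rev_rev]
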